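/- Let Ω ⊂ ℝ^d be a bounded domain and let S_h ⊂ H¹₀(Ω) be a finite-dimensional subspace. Let (w,ξ) ∈ H¹₀(Ω)×H¹₀(Ω) satisfy ∫_Ω ∇w·∇q + ξq dx = 0 for all q ∈ H¹₀(Ω), and let (w_h,ξ_h) ∈ S_h×S_h satisfy ∫_Ω ∇w_h·∇q_h + ξ_h q_h dx = 0 for all q_h ∈ S_h. Let R_h w ∈ S_h be the Ritz projection of w. Then ‖∇(w − w_h)‖_{L²(Ω)} ≤ C ‖ξ − ξ_h‖_{L²(Ω)} + ‖∇(w − R_h w)‖_{L²(Ω)}, where C depends only on the Poincaré constant of Ω. -/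

import Mathlib

/- Model: `V` is `H¹₀(Ω)` with the Dirichlet inner product (`‖v‖ = ‖∇v‖_{L²}`), `E` is
`L²(Ω)`, and `ι : V →L[ℝ] E` is the inclusion, with Poincaré inequality
`‖w‖_{L²} = ‖ι w‖ ≤ CP ‖w‖ = CP ‖∇w‖_{L²}`.  `S_h ⊆ V` is a finite-dimensional subspace.
Hypotheses: `(w,ξ)` satisfies `∫ ∇w·∇q + ξ q = 0` for all `q ∈ H¹₀`, `(w_h,ξ_h) ∈ S_h×S_h`
satisfies the discrete analogue, and `R w` is the Ritz projection of `w` onto `S_h`.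
Conclusion: `‖∇(w − w_h)‖ ≤ CP ‖ξ − ξ_h‖_{L²} + ‖∇(w − R w)‖`, with constant `CP`
depending only on the Poincaré constant of `Ω`. -/
open scoped RealInnerProductSpace

theorem stmt_6
    {V E : Type*} [NormedAddCommGroup V] [InnerProductSpace ℝ V] [CompleteSpace V]
    [NormedAddCommGroup E] [InnerProductSpace ℝ E] [CompleteSpace E]
    (ι : V →L[ℝ] E) (CP : ℝ) (hCP : ∀ v : V, ‖ι v‖ ≤ CP * ‖v‖)
    (Sh : Submodule ℝ V) [FiniteDimensional ℝ Sh]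
    (w ξ wh ξh Rw : V)
    (hw : ∀ q : V, ⟪w, q⟫ + ⟪ι ξ, ι q⟫ = 0)
    (hwh : wh ∈ Sh) (hξh : ξh ∈ Sh)
    (hdisc : ∀ qh ∈ Sh, ⟪wh, qh⟫ + ⟪ι ξh, ι qh⟫ = 0)
    (hRw : Rw ∈ Sh) (hRitz : ∀ vh ∈ Sh, ⟪Rw - w, vh⟫ = 0) :
    ‖w - wh‖ ≤ CP * ‖ι ξ - ι ξh‖ + ‖w - Rw‖ := by
  rcases subsingleton_or_nontrivial V with hV | hV
  · have h1 : w - wh = 0 := Subsingleton.elim _ _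
    have h2 : w - Rw = 0 := Subsingleton.elim _ _
    have h3 : ξ = ξh := Subsingleton.elim _ _
    simp [h1, h2, h3]
  · have hCP0 : 0 ≤ CP := by
      obtain ⟨v, hv⟩ := exists_ne (0 : V)
      have h := hCP v
      have hp : 0 < ‖v‖ := norm_pos_iff.mpr hv
      nlinarith [norm_nonneg (ι v)]
    set qh := Rw - wh with hqh
    have hqhS : qh ∈ Sh := Sh.sub_mem hRw hwh
    have key : ⟪qh, qh⟫ = -⟪ι ξ - ι ξh, ι qh⟫ := by
      have h1 := hw qh
      have h2 := hdisc qh hqhS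
      have h3 := hRitz qh hqhS
      have e1 : ⟪qh, qh⟫ = ⟪w - wh, qh⟫ + ⟪Rw - w, qh⟫ := by
        rw [← inner_add_left]; congr 1; rw [hqh]; abel
      rw [e1, h3, add_zero, inner_sub_left, inner_sub_left]
      linarith
    have hbound : ‖qh‖ ≤ CP * ‖ι ξ - ι ξh‖ := by
      rcases eq_or_ne qh 0 with h0 | h0
      · rw [h0, norm_zero]; positivity
      · have hpos : 0 < ‖qh‖ := norm_pos_iff.mpr h0
        have h1 : ⟪qh, qh⟫ ≤ ‖ι ξ - ι ξh‖ * ‖ι qh‖ := by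
          rw [key]
          calc -⟪ι ξ - ι ξh, ι qh⟫ ≤ |⟪ι ξ - ι ξh, ι qh⟫| := neg_le_abs _
            _ ≤ ‖ι ξ - ι ξh‖ * ‖ι qh‖ := abs_real_inner_le_norm _ _
        have h2 : ‖ι qh‖ ≤ CP * ‖qh‖ := hCP qh
        have h3 : ‖qh‖ * ‖qh‖ ≤ ‖ι ξ - ι ξh‖ * (CP * ‖qh‖) := by
          rw [← real_inner_self_eq_norm_mul_norm]
          calc ⟪qh, qh⟫ ≤ ‖ι ξ - ι ξh‖ * ‖ι qh‖ := h1
            _ ≤ ‖ι ξ - ι ξh‖ * (CP * ‖qh‖) :=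
              mul_le_mul_of_nonneg_left h2 (norm_nonneg _)
        have := (mul_le_mul_iff_of_pos_right hpos).mp
          (by linarith : ‖qh‖ * ‖qh‖ ≤ CP * ‖ι ξ - ι ξh‖ * ‖qh‖)
        linarith
    calc ‖w - wh‖ = ‖(Rw - wh) + (w - Rw)‖ := by congr 1; abel
      _ ≤ ‖Rw - wh‖ + ‖w - Rw‖ := norm_add_le _ _
      _ ≤ CP * ‖ι ξ - ι ξh‖ + ‖w - Rw‖ := by linarith [hbound]
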